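/- arXiv:1902.09620 — 2 statements merged into one kernel-verified Lean document; each statement's English description precedes it below -/
import Mathlib

section
/- Let F be a field with char(F) ≠ 2 and G a non-abelian group with involution * extended to FG. If FG is normal, then G is an LC-group: for all g, h ∈ G, gh = hg if and only if at least one of g, h, gh lies in the center of G. -/
/-- The F-linear extension of a group involution `st` to the group algebra. -/
noncomputable def invMap {F G : Type*} [Field F] [Group G] (st : G → G) :
    MonoidAlgebra F G → MonoidAlgebra F G :=
  fun α => MonoidAlgebra.ofCoeff (Finsupp.mapDomain st α.coeff)

section Aux
variable {F G : Type*} [Field F] [Group G]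

lemma invMap_single (st : G → G) (a : G) (x : F) :
    invMap st (MonoidAlgebra.single a x) = MonoidAlgebra.single (st a) x := by
  unfold invMap
  rw [MonoidAlgebra.coeff_single, Finsupp.mapDomain_single, MonoidAlgebra.ofCoeff_single]

/-- every g commutes with st g -/
lemma aux_f1 (st : G → G)
    (hnormal : ∀ α : MonoidAlgebra F G, α * invMap st α = invMap st α * α)
    (g : G) : g * st g = st g * g := by
  have h := hnormal (MonoidAlgebra.single g 1)
  rw [invMap_single, MonoidAlgebra.single_mul_single, MonoidAlgebra.single_mul_single] at h
  rcases (Finsupp.single_eq_single_iff _ _ _ _).mp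
    (by simpa only [MonoidAlgebra.coeff_single] using congrArg MonoidAlgebra.coeff h) with ⟨h1, _⟩ | ⟨h1, _⟩
  · exact h1
  · exact absurd h1 (by norm_num)

/-- extraction from an equation of pairs of singles -/
lemma aux_pair (h2 : (2 : F) ≠ 0) {A B C D : G} (hAD : A ≠ D)
    (hE : (Finsupp.single A (1:F) + Finsupp.single B 1 : G →₀ F)
        = Finsupp.single C 1 + Finsupp.single D 1) :
    A = C ∧ B = D := by
  have h12 : (1:F) + 1 ≠ 0 := by
    intro h; exact h2 (by rw [← h]; norm_num)
  constructor
  · by_contra hC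
    have hA := DFunLike.congr_fun hE A
    rw [Finsupp.add_apply, Finsupp.add_apply, Finsupp.single_eq_same,
      Finsupp.single_eq_of_ne' (fun e => hC e.symm),
      Finsupp.single_eq_of_ne' (fun e => hAD e.symm)] at hA
    by_cases hBA : B = A
    · subst hBA
      rw [Finsupp.single_eq_same] at hA
      exact h12 (by simpa using hA)
    · rw [Finsupp.single_eq_of_ne' hBA] at hA
      exact (one_ne_zero (α := F)) (by simpa using hA)
  · by_contra hB
    have hD := DFunLike.congr_fun hE D
    rw [Finsupp.add_apply, Finsupp.add_apply, Finsupp.single_eq_same,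
      Finsupp.single_eq_of_ne' hAD, Finsupp.single_eq_of_ne' hB] at hD
    by_cases hCD : C = D
    · subst hCD
      rw [Finsupp.single_eq_same] at hD
      exact h12 (by simpa using hD.symm)
    · rw [Finsupp.single_eq_of_ne' hCD] at hD
      exact (one_ne_zero (α := F)) (by simpa using hD.symm)

/-- Key consequence of normality: if gh ≠ hg then st g * st h = g*h and st h * st g = h*g. -/
lemma aux_K (h2 : (2 : F) ≠ 0) (st : G → G)
    (hinvol : ∀ g : G, st (st g) = g)
    (hnormal : ∀ α : MonoidAlgebra F G, α * invMap st α = invMap st α * α)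
    (g h : G) (hne : g * h ≠ h * g) :
    st g * st h = g * h ∧ st h * st g = h * g := by
  have f1g := aux_f1 st hnormal g
  have f1h := aux_f1 st hnormal h
  have hE := hnormal (MonoidAlgebra.single g 1 + MonoidAlgebra.single (st h) 1)
  rw [show invMap st (MonoidAlgebra.single g (1:F) + MonoidAlgebra.single (st h) 1)
      = invMap st (MonoidAlgebra.single g (1:F)) + invMap st (MonoidAlgebra.single (st h) 1) from by
        unfold invMap
        rw [MonoidAlgebra.coeff_add, Finsupp.mapDomain_add, MonoidAlgebra.ofCoeff_add]] at hE
  rw [invMap_single, invMap_single, hinvol] at hE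
  rw [add_mul, mul_add, mul_add, add_mul, mul_add, mul_add] at hE
  simp only [MonoidAlgebra.single_mul_single, one_mul] at hE
  -- hE : (single (g*st g) + single (g*h)) + (single (st h*st g) + single (st h*h))
  --    = (single (st g*g) + single (st g*st h)) + (single (h*g) + single (h*st h))
  have key : MonoidAlgebra.single (g*h) (1:F) + MonoidAlgebra.single (st h * st g) 1
      = MonoidAlgebra.single (st g * st h) 1 + MonoidAlgebra.single (h*g) 1 := by
    have h' : MonoidAlgebra.single (g * st g) (1:F) + MonoidAlgebra.single (st h * h) 1
        + (MonoidAlgebra.single (g*h) 1 + MonoidAlgebra.single (st h * st g) 1)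
        = MonoidAlgebra.single (g * st g) (1:F) + MonoidAlgebra.single (st h * h) 1
        + (MonoidAlgebra.single (st g * st h) 1 + MonoidAlgebra.single (h*g) 1) := by
      calc MonoidAlgebra.single (g * st g) (1:F) + MonoidAlgebra.single (st h * h) 1
          + (MonoidAlgebra.single (g*h) 1 + MonoidAlgebra.single (st h * st g) 1)
          = MonoidAlgebra.single (g * st g) (1:F) + MonoidAlgebra.single (g*h) 1
          + (MonoidAlgebra.single (st h * st g) 1 + MonoidAlgebra.single (st h * h) 1) := by abel
        _ = MonoidAlgebra.single (st g * g) (1:F) + MonoidAlgebra.single (st g * st h) 1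
          + (MonoidAlgebra.single (h*g) 1 + MonoidAlgebra.single (h * st h) 1) := hE
        _ = MonoidAlgebra.single (g * st g) (1:F) + MonoidAlgebra.single (st h * h) 1
          + (MonoidAlgebra.single (st g * st h) 1 + MonoidAlgebra.single (h*g) 1) := by
            rw [← f1g, ← f1h]; abel
    exact add_left_cancel h'
  obtain ⟨h1, h3⟩ := aux_pair h2 hne
    (by simpa only [MonoidAlgebra.coeff_add, MonoidAlgebra.coeff_single] using
      congrArg MonoidAlgebra.coeff key)
  exact ⟨h1.symm, h3⟩

end Aux

section Grp
variable {G : Type*} [Group G]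

/-- conjugation formula: if g and x don't commute then st g = x⁻¹ g x -/
lemma aux_conj (st : G → G) (hanti : ∀ g h : G, st (g * h) = st h * st g)
    (K : ∀ g h : G, g * h ≠ h * g → st g * st h = g * h ∧ st h * st g = h * g)
    (g x : G) (hgx : g * x ≠ x * g) : st g = x⁻¹ * g * x := by
  have e1 := (K g x hgx).1
  have hne2 : g * (g * x) ≠ (g * x) * g := by
    intro e
    apply hgx
    rw [mul_assoc] at e
    exact mul_left_cancel e
  have e2 := (K g (g * x) hne2).1
  rw [hanti g x] at e2
  -- e2 : st g * (st x * st g) = g * (g * x)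
  rw [← mul_assoc, e1] at e2
  -- e2 : (g * x) * st g = g * (g * x)
  have : x * st g = g * x := by
    have := e2
    rw [mul_assoc g x (st g)] at this
    exact mul_left_cancel this
  rw [mul_assoc, ← this, inv_mul_cancel_left]

/-- a noncentral-type element is moved by st -/
lemma aux_stne (st : G → G) (hanti : ∀ g h : G, st (g * h) = st h * st g)
    (K : ∀ g h : G, g * h ≠ h * g → st g * st h = g * h ∧ st h * st g = h * g)
    (g x : G) (hgx : g * x ≠ x * g) : st g ≠ g := by
  intro e
  apply hgx
  have h := aux_conj st hanti K g x hgx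
  rw [e] at h
  -- h : g = x⁻¹ * g * x
  rw [mul_assoc, eq_inv_mul_iff_mul_eq] at h
  exact h.symm

end Grp


theorem stmt_5 {F G : Type*} [Field F] [Group G] (h2 : (2 : F) ≠ 0)
    (hna : ∃ g h : G, g * h ≠ h * g)
    (st : G → G) (hanti : ∀ g h : G, st (g * h) = st h * st g)
    (hinvol : ∀ g : G, st (st g) = g)
    (hnormal : ∀ α : MonoidAlgebra F G, α * invMap st α = invMap st α * α) :
    ∀ g h : G, g * h = h * g ↔
      (g ∈ Subgroup.center G ∨ h ∈ Subgroup.center G ∨ g * h ∈ Subgroup.center G) := by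
  have K : ∀ g h : G, g * h ≠ h * g → st g * st h = g * h ∧ st h * st g = h * g :=
    fun g h hne => aux_K h2 st hinvol hnormal g h hne
  intro g h
  constructor
  · intro hcomm
    by_contra hcon
    push_neg at hcon
    obtain ⟨hg, hh, hgh⟩ := hcon
    rw [Subgroup.mem_center_iff] at hg hh hgh
    push_neg at hg hh hgh
    obtain ⟨x, hx⟩ := hgh
    have hghx : (g * h) * x ≠ x * (g * h) := fun e => hx e.symm
    obtain ⟨zg, hzg⟩ := hg
    obtain ⟨zh, hzh⟩ := hh
    have hstg_ne : st g ≠ g := aux_stne st hanti K g zg (fun e => hzg e.symm)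
    have hsth_ne : st h ≠ h := aux_stne st hanti K h zh (fun e => hzh e.symm)
    have e0 : st g * st h = st (g * h) := by
      rw [hcomm]; exact (hanti h g).symm
    have hstgh : st (g * h) = x⁻¹ * (g * h) * x := aux_conj st hanti K (g * h) x hghx
    by_cases hgx : g * x = x * g <;> by_cases hhx : h * x = x * h
    · -- both commute with x : contradiction with hx
      apply hx
      calc x * (g * h) = (x * g) * h := by group
        _ = (g * x) * h := by rw [hgx]
        _ = g * (x * h) := by group
        _ = g * (h * x) := by rw [hhx]
        _ = (g * h) * x := by group
    · -- g commutes with x, h doesn't : derive st g = g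
      have hsth : st h = x⁻¹ * h * x := aux_conj st hanti K h x hhx
      apply hstg_ne
      have e1 : st g * st h = g * st h := by
        rw [e0, hstgh, hsth]
        calc x⁻¹ * (g * h) * x = (x⁻¹ * g) * (h * x) := by group
          _ = (g * x⁻¹) * (h * x) := by rw [(Commute.inv_right (hgx : Commute g x)).eq]
          _ = g * (x⁻¹ * h * x) := by group
      exact mul_right_cancel e1
    · -- h commutes with x, g doesn't : derive st h = h
      have hstg : st g = x⁻¹ * g * x := aux_conj st hanti K g x hgx
      apply hsth_ne
      have e1 : st g * st h = st g * h := by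
        rw [e0, hstgh, hstg]
        calc x⁻¹ * (g * h) * x = (x⁻¹ * g) * (h * x) := by group
          _ = (x⁻¹ * g) * (x * h) := by rw [hhx]
          _ = (x⁻¹ * g * x) * h := by group
      exact mul_left_cancel e1
    · -- x commutes with neither g nor h
      have hxg : x * g ≠ g * x := fun e => hgx e.symm
      have hxh : x * h ≠ h * x := fun e => hhx e.symm
      have hstg : st g = x⁻¹ * g * x := aux_conj st hanti K g x hgx
      have hsth : st h = x⁻¹ * h * x := aux_conj st hanti K h x hhx
      have hstx1 : st x = g⁻¹ * x * g := aux_conj st hanti K x g hxg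
      have hstx2 : st x = h⁻¹ * x * h := aux_conj st hanti K x h hxh
      have f1g := aux_f1 st hnormal g
      have f1h := aux_f1 st hnormal h
      have f1x := aux_f1 st hnormal x
      obtain ⟨s, hs⟩ : ∃ s : G, s = g⁻¹ * x⁻¹ * g * x := ⟨_, rfl⟩
      have hgs : st g = g * s := by rw [hstg, hs]; group
      have hxs : st x = x * s⁻¹ := by rw [hstx1, hs]; group
      rw [hxs] at f1x
      have hsx : s * x = x * s := by
        have e : x * s⁻¹ = s⁻¹ * x := mul_left_cancel (a := x)
          (show x * (x * s⁻¹) = x * (s⁻¹ * x) by rw [f1x]; group)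
        have h1 : Commute x s⁻¹ := e
        simpa using h1.symm.inv_left.eq
      rw [hgs] at f1g
      have hsg : s * g = g * s :=
        (mul_left_cancel (a := g) (show g * (g * s) = g * (s * g) by rw [f1g]; group)).symm
      have hxs2 : x * s⁻¹ = h⁻¹ * x * h := by rw [← hxs]; exact hstx2
      have hxh' : x * h = h * (x * s⁻¹) := by rw [hxs2]; group
      have hhx2 : h * x = x * h * s := by rw [hxh']; group
      have hsth2 : st h = h * s := by
        rw [hsth]
        calc x⁻¹ * h * x = x⁻¹ * (h * x) := by group
          _ = x⁻¹ * (x * h * s) := by rw [hhx2]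
          _ = h * s := by group
      rw [hsth2] at f1h
      have hsh : s * h = h * s :=
        (mul_left_cancel (a := h) (show h * (h * s) = h * (s * h) by rw [f1h]; group)).symm
      -- the key equation from K applied to (g, x*h)
      have hne8 : g * (x * h) ≠ (x * h) * g := by
        intro e
        apply hgx
        have e' : (g * x) * h = (x * g) * h := by
          calc (g * x) * h = g * (x * h) := by group
            _ = (x * h) * g := e
            _ = x * (h * g) := by group
            _ = x * (g * h) := by rw [← hcomm]
            _ = (x * g) * h := by group
        exact mul_right_cancel e'
      have e8full := (K g (x * h) hne8).1
      rw [hanti x h] at e8full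
      have e8' : (g * s) * ((h * s) * (x * s⁻¹)) = g * (x * h) := by
        rw [← hgs, ← hsth2, ← hxs]; exact e8full
      have e9 : g * (s * (h * (s * (x * s⁻¹)))) = g * (x * h) := by
        calc g * (s * (h * (s * (x * s⁻¹)))) = (g * s) * ((h * s) * (x * s⁻¹)) := by group
          _ = g * (x * h) := e8'
      have e10 : s * (h * (s * (x * s⁻¹))) = x * h := mul_left_cancel e9
      have e11 : s * (x * s⁻¹) = x := by rw [← mul_assoc, hsx]; group
      rw [e11, hxh'] at e10
      -- e10 : s * (h * x) = h * (x * s⁻¹)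
      have e13 : s * (h * x) = (h * x) * s := by
        calc s * (h * x) = (s * h) * x := by group
          _ = (h * s) * x := by rw [hsh]
          _ = h * (s * x) := by group
          _ = h * (x * s) := by rw [hsx]
          _ = (h * x) * s := by group
      have e14 : (h * x) * s = (h * x) * s⁻¹ := by rw [← e13, e10]; group
      have s_eq : s = s⁻¹ := mul_left_cancel e14
      have hss : s * s = 1 := mul_eq_one_iff_eq_inv.mpr s_eq
      apply aux_stne st hanti K (g * h) x hghx
      rw [hanti g h, hsth2, hgs]
      calc (h * s) * (g * s) = h * (s * g) * s := by group
        _ = h * (g * s) * s := by rw [hsg]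
        _ = (h * g) * (s * s) := by group
        _ = h * g := by rw [hss, mul_one]
        _ = g * h := hcomm.symm
  · intro hd
    rcases hd with hc | hc | hc
    · exact ((Subgroup.mem_center_iff.mp hc) h).symm
    · exact (Subgroup.mem_center_iff.mp hc) g
    · have e := (Subgroup.mem_center_iff.mp hc) g
      -- e : g * (g * h) = (g * h) * g
      have e' : g * (g * h) = g * (h * g) := by rw [e]; group
      exact mul_left_cancel e'
end

section
/- Let F be a field with char(F) ≠ 2, G a group with non-trivial orientation σ and involution *, N = ker(σ). If FG is normal with respect to the oriented involution ⊛, then every element of N⁺ = {n ∈ N : n* = n} is central in G. -/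
/-- The oriented involution on the group algebra: `(Σ α_g g)⊛ = Σ α_g σ(g) g*`. -/
noncomputable def oinvMap {F G : Type*} [Field F] [Group G] (st : G → G) (σ : G → F) :
    MonoidAlgebra F G → MonoidAlgebra F G :=
  fun α => Finsupp.sum α.coeff fun g c => MonoidAlgebra.single (st g) (σ g * c)

section Aux
variable {F G : Type*} [Field F] [Group G]

lemma oinv_single (st : G → G) (σ : G → F) (a : G) (c : F) :
    oinvMap st σ (MonoidAlgebra.single a c) = MonoidAlgebra.single (st a) (σ a * c) := by
  unfold oinvMap
  rw [MonoidAlgebra.coeff_single, Finsupp.sum_single_index]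
  simp

lemma oinv_add (st : G → G) (σ : G → F) (α β : MonoidAlgebra F G) :
    oinvMap st σ (α + β) = oinvMap st σ α + oinvMap st σ β := by
  unfold oinvMap
  rw [MonoidAlgebra.coeff_add]
  apply Finsupp.sum_add_index' <;> intros <;> simp [mul_add, MonoidAlgebra.single_add]

lemma dich (h2 : (2 : F) ≠ 0)
    (st : G → G) (σ : G → F) (hhom : ∀ g h : G, σ (g * h) = σ g * σ h)
    (hker : ∀ g : G, σ (g * st g) = 1)
    (hnormal : ∀ α : MonoidAlgebra F G, α * oinvMap st σ α = oinvMap st σ α * α)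
    (n x : G) (hn1 : σ n = 1) (hn2 : st n = n) (hx : σ x = -1) :
    x * n = n * x ∨ x * n = n * st x := by
  by_cases hc : x * n = n * x
  · exact Or.inl hc
  by_cases hc2 : x * n = n * st x
  · exact Or.inr hc2
  exfalso
  have h12 : (1 : F) ≠ -1 := by
    intro h; apply h2; linear_combination h
  have hσst : σ (st x) = -1 := by
    have h := hker x; rw [hhom x (st x), hx] at h; linear_combination -h
  have heq := hnormal (MonoidAlgebra.single n 1 + MonoidAlgebra.single x 1)
  have hα : oinvMap st σ (MonoidAlgebra.single n (1:F) + MonoidAlgebra.single x 1) =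
      MonoidAlgebra.single n 1 + MonoidAlgebra.single (st x) (-1) := by
    rw [oinv_add, oinv_single, oinv_single, hn1, hn2, hx]; norm_num
  rw [hα] at heq
  simp only [add_mul, mul_add, MonoidAlgebra.single_mul_single, one_mul, mul_one,
    mul_neg, neg_mul] at heq
  have heq' : ((MonoidAlgebra.single (n*n) 1 + MonoidAlgebra.single (x*n) 1) +
      (MonoidAlgebra.single (n*st x) (-1) + MonoidAlgebra.single (x*st x) (-1)) : MonoidAlgebra F G) =
      ((MonoidAlgebra.single (n*n) 1 + MonoidAlgebra.single (st x*n) (-1)) +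
      (MonoidAlgebra.single (n*x) 1 + MonoidAlgebra.single (st x*x) (-1)) : MonoidAlgebra F G) := heq
  have hpt := congrArg (fun a : MonoidAlgebra F G => a.coeff (x * n)) heq'
  -- rule out impossible coincidences
  have e1 : n * n ≠ x * n := fun h => by
    have : n = x := mul_right_cancel h
    rw [← this, hn1] at hx; exact h12 hx
  have e2 : x * st x ≠ x * n := fun h => by
    have : st x = n := mul_left_cancel h
    rw [this, hn1] at hσst; exact h12 hσst
  have e3 : st x * x ≠ x * n := fun h => by
    have h' := congrArg σ h
    rw [hhom, hhom, hσst, hx, hn1] at h'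
    exact h12 (by linear_combination h')
  have e4 : n * st x ≠ x * n := fun h => hc2 h.symm
  have e5 : n * x ≠ x * n := fun h => hc h.symm
  classical
  simp only [MonoidAlgebra.coeff_add, MonoidAlgebra.coeff_single, Finsupp.add_apply, Finsupp.single_apply, if_neg e1,
    if_neg e2, if_neg e3, if_neg e4, if_neg e5, if_pos rfl] at hpt
  split_ifs at hpt <;>
    first
      | exact absurd trivial (by assumption)
      | exact h12 (by linear_combination hpt)
      | exact h2 (by linear_combination 2 * hpt)

end Aux

theorem stmt_12 {F G : Type*} [Field F] [Group G] (h2 : (2 : F) ≠ 0)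
    (st : G → G) (hanti : ∀ g h : G, st (g * h) = st h * st g)
    (hinvol : ∀ g : G, st (st g) = g)
    (σ : G → F) (hhom : ∀ g h : G, σ (g * h) = σ g * σ h)
    (hval : ∀ g : G, σ g = 1 ∨ σ g = -1)
    (hnt : ∃ g : G, σ g = -1)
    (hker : ∀ g : G, σ (g * st g) = 1)
    (hnormal : ∀ α : MonoidAlgebra F G, α * oinvMap st σ α = oinvMap st σ α * α) :
    ∀ n : G, σ n = 1 → st n = n → n ∈ Subgroup.center G := by
  intro n hn1 hn2
  -- every element of σ⁻¹(-1) commutes with n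
  have comm_neg : ∀ x : G, σ x = -1 → x * n = n * x := by
    intro x hx
    rcases dich h2 st σ hhom hker hnormal n x hn1 hn2 hx with h | h
    · exact h
    · have hx' : σ (x * n) = -1 := by rw [hhom, hx, hn1]; ring
      have hst' : st (x * n) = x * n := by rw [hanti, hn2, ← h]
      rcases dich h2 st σ hhom hker hnormal n (x * n) hn1 hn2 hx' with h' | h' <;>
        rw [hst'] at * <;>
        [exact mul_right_cancel (by rw [mul_assoc] at h' ⊢; rw [h']; group);
         exact mul_right_cancel (by rw [mul_assoc] at h' ⊢; rw [h']; group)]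
  rw [Subgroup.mem_center_iff]
  intro g
  rcases hval g with h1 | h1
  · obtain ⟨t, ht⟩ := hnt
    have htg : σ (t * g) = -1 := by rw [hhom, ht, h1]; ring
    have c1 := comm_neg t ht
    have c2 := comm_neg (t * g) htg
    have : t * (g * n) = t * (n * g) := by
      rw [← mul_assoc, c2, ← mul_assoc, ← c1, mul_assoc]
    exact mul_left_cancel this
  · exact comm_neg g h1
end
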